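/- Let φ_N be a solution of the N-periodic Riccati system and define its discrete Fourier transform \hat{φ}_N^k(t) := Σ_{j=0}^{N−1} φ_N^j(t) exp(−2π√(−1) jk / N) for k = 0,1,…,N−1 and t ∈ [0,T]. Then for each k, the ℂ-valued function t ↦ \hat{φ}_N^k(t) satisfies the scalar Riccati equation (d/dt)\hat{φ}_N^k(t) = (\hat{φ}_N^k(t))² − (1 − e^{−2π√(−1)k/N}) ε on [0,T] with terminal condition \hat{φ}_N^k(T) = (1 − e^{−2π√(−1)k/N}) c. -/

import Mathlib

open scoped BigOperators

/-- The sequence ε^i with integer index. -/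
noncomputable def epsZ (ε : ℝ) : ℤ → ℝ := fun i => if i = 0 then ε else if i = 1 then -ε else 0

/-- `φ` is a solution of the `N`-periodic Riccati system on `[0,T]`. -/
def IsPerRiccatiSol (T ε c : ℝ) (N : ℕ) (φ : ℤ → ℝ → ℝ) : Prop :=
  (∀ i : ℤ, φ (i + (N : ℤ)) = φ i) ∧
  (∀ i : ℕ, i < N → ∀ t ∈ Set.Icc (0:ℝ) T,
    HasDerivWithinAt (φ (i : ℤ))
      ((∑ j ∈ Finset.range N, φ (j : ℤ) t * φ ((N : ℤ) + (i : ℤ) - (j : ℤ)) t) - epsZ ε (i : ℤ))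
      (Set.Icc (0:ℝ) T) t) ∧
  φ 0 T = c ∧ φ 1 T = -c ∧ ∀ i : ℕ, 2 ≤ i → i < N → φ (i : ℤ) T = 0

/-- The discrete Fourier transform of `(φ^j)_{j=0,…,N-1}` at frequency `k`:
`\hatφ^k(t) := ∑_{j=0}^{N-1} φ^j(t) exp(−2π√(−1) jk/N)`. -/
noncomputable def dft (N : ℕ) (φ : ℤ → ℝ → ℝ) (k : ℕ) (t : ℝ) : ℂ :=
  ∑ j ∈ Finset.range N,
    (φ (j : ℤ) t : ℂ) * Complex.exp (-(2 * Real.pi * Complex.I * (j : ℂ) * (k : ℂ)) / (N : ℂ))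


noncomputable def eC (N k : ℕ) (m : ℤ) : ℂ :=
  Complex.exp (-(2 * Real.pi * Complex.I * (m : ℂ) * (k : ℂ)) / (N : ℂ))

lemma eC_add (N k : ℕ) (a b : ℤ) : eC N k (a + b) = eC N k a * eC N k b := by
  rw [eC, eC, eC, ← Complex.exp_add]
  congr 1
  push_cast
  ring

lemma eC_zero (N k : ℕ) : eC N k 0 = 1 := by
  simp [eC]

lemma eC_int_mul (N k : ℕ) (hN : N ≠ 0) (q : ℤ) : eC N k (q * N) = 1 := by
  rw [eC]
  have hNC : (N : ℂ) ≠ 0 := Nat.cast_ne_zero.mpr hN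
  have h : -(2 * Real.pi * Complex.I * ((q * N : ℤ) : ℂ) * (k : ℂ)) / (N : ℂ)
      = ((-(q * k) : ℤ) : ℂ) * (2 * Real.pi * Complex.I) := by
    field_simp
    push_cast
    ring
  rw [h, Complex.exp_int_mul_two_pi_mul_I]

lemma eC_period (N k : ℕ) (hN : N ≠ 0) (m q : ℤ) : eC N k (m + q * N) = eC N k m := by
  rw [eC_add, eC_int_mul N k hN q, mul_one]

lemma conv_sum (N : ℕ) (hN : N ≠ 0) (k : ℕ) (a : ℤ → ℂ)
    (hper : ∀ q i : ℤ, a (i + q * N) = a i) :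
    ∑ j ∈ Finset.range N, (∑ j' ∈ Finset.range N, a j' * a ((N : ℤ) + j - j')) * eC N k j
      = (∑ j ∈ Finset.range N, a j * eC N k j) ^ 2 := by
  rw [sq, Finset.sum_mul_sum]
  simp only [Finset.sum_mul]
  rw [Finset.sum_comm]
  refine Finset.sum_congr rfl ?_
  intro j' hj'
  rw [Finset.mem_range] at hj'
  refine Finset.sum_nbij' (fun j => (j + (N - j')) % N) (fun b => (b + j') % N) ?_ ?_ ?_ ?_ ?_
  · intro b _; exact Finset.mem_range.mpr (Nat.mod_lt _ (Nat.pos_of_ne_zero hN))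
  · intro j _; exact Finset.mem_range.mpr (Nat.mod_lt _ (Nat.pos_of_ne_zero hN))
  · intro j hjm
    rw [Finset.mem_range] at hjm
    beta_reduce
    rw [Nat.mod_add_mod, show j + (N - j') + j' = j + N by omega, Nat.add_mod_right,
      Nat.mod_eq_of_lt hjm]
  · intro b hb
    rw [Finset.mem_range] at hb
    beta_reduce
    rw [Nat.mod_add_mod, show b + j' + (N - j') = b + N by omega, Nat.add_mod_right,
      Nat.mod_eq_of_lt hb]
  · intro j hjm
    rw [Finset.mem_range] at hjm
    beta_reduce
    set b : ℕ := (j + (N - j')) % N with hb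
    set q' : ℕ := (j + (N - j')) / N with hq'
    have h0 : N * q' + b = j + (N - j') := Nat.div_add_mod (j + (N - j')) N
    have h0' : (N : ℤ) * q' + b = (j : ℤ) + ((N : ℤ) - j') := by
      zify [hj'.le] at h0
      linarith
    set q : ℤ := (q' : ℤ) with hqdef
    have h1 : a ((N : ℤ) + j - j') = a b := by
      rw [show (b : ℤ) = ((N : ℤ) + j - j') + (-q) * N by rw [hqdef]; linarith, hper]
    have h2 : eC N k j = eC N k j' * eC N k b := by
      rw [show (j : ℤ) = ((j' : ℤ) + b) + (q - 1) * N by rw [hqdef]; linarith,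
        eC_period N k hN, eC_add]
    rw [h1, h2]
    ring

lemma eC_one_eq (N k : ℕ) :
    Complex.exp (-(2 * Real.pi * Complex.I * (k : ℂ)) / (N : ℂ)) = eC N k 1 := by
  rw [eC]; norm_num

lemma dft_eq (N k : ℕ) (φ : ℤ → ℝ → ℝ) (t : ℝ) :
    dft N φ k t = ∑ j ∈ Finset.range N, ((φ (j : ℤ) t : ℝ) : ℂ) * eC N k (j : ℤ) := by
  unfold dft eC
  refine Finset.sum_congr rfl fun j _ => ?_
  norm_cast

lemma per_all {φ : ℤ → ℝ → ℝ} (N : ℕ) (hper : ∀ i : ℤ, φ (i + (N : ℤ)) = φ i) (q i : ℤ) :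
    φ (i + q * N) = φ i := by
  induction q using Int.induction_on with
  | zero => simp
  | succ n ih => rw [show i + ((n : ℤ) + 1) * N = (i + n * N) + N by ring, hper, ih]
  | pred n ih =>
      have h := hper (i + (-(n : ℤ) - 1) * N)
      rw [show (i + (-(n : ℤ) - 1) * N) + N = i + (-(n : ℤ)) * N by ring] at h
      rw [show i + (-(n : ℤ) - 1) * N = i + (-(n : ℤ) - 1) * N from rfl] at h
      calc φ (i + (-(n : ℤ) + -1) * N) = φ (i + (-(n : ℤ) - 1) * N) := by ring_nf
        _ = φ (i + (-(n : ℤ)) * N) := h.symm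
        _ = φ i := ih

lemma eps_sum (N k : ℕ) (hN : 2 ≤ N) (ε : ℝ) :
    ∑ j ∈ Finset.range N, ((epsZ ε (j : ℤ) : ℝ) : ℂ) * eC N k (j : ℤ)
      = (1 - eC N k 1) * (ε : ℂ) := by
  rw [← Finset.sum_subset (Finset.range_subset_range.mpr hN) (fun x _ hx2 => by
    rw [Finset.mem_range, not_lt] at hx2
    simp [epsZ, show (x : ℤ) ≠ 0 by omega, show (x : ℤ) ≠ 1 by omega, show x ≠ 0 by omega])]
  rw [Finset.sum_range_succ, Finset.sum_range_one]
  norm_num [epsZ, eC_zero]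
  ring


/-- The discrete Fourier transform `\hatφ_N^k` of a solution of the `N`-periodic Riccati
system satisfies the scalar Riccati equation
`(d/dt)\hatφ_N^k(t) = (\hatφ_N^k(t))² − (1 − e^{−2π√(−1)k/N}) ε` on `[0,T]` with terminal
condition `\hatφ_N^k(T) = (1 − e^{−2π√(−1)k/N}) c`. -/
theorem dft_solves_scalar_riccati
    (T ε c : ℝ) (hT : 0 < T) (hε : 0 < ε) (hc : 0 ≤ c)
    (N : ℕ) (hN : 2 ≤ N) (φ : ℤ → ℝ → ℝ) (hφ : IsPerRiccatiSol T ε c N φ) :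
    ∀ k : ℕ, k < N →
      (∀ t ∈ Set.Icc (0:ℝ) T,
        HasDerivWithinAt (fun s : ℝ => dft N φ k s)
          ((dft N φ k t) ^ 2 -
            (1 - Complex.exp (-(2 * Real.pi * Complex.I * (k : ℂ)) / (N : ℂ))) * (ε : ℂ))
          (Set.Icc (0:ℝ) T) t) ∧
      dft N φ k T = (1 - Complex.exp (-(2 * Real.pi * Complex.I * (k : ℂ)) / (N : ℂ))) * (c : ℂ) := by
  obtain ⟨hper, hderiv, h0T, h1T, hiT⟩ := hφ
  have hN0 : N ≠ 0 := by omega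
  intro k hk
  have hfun : (fun s : ℝ => dft N φ k s)
      = fun s => ∑ j ∈ Finset.range N, ((φ (j : ℤ) s : ℝ) : ℂ) * eC N k (j : ℤ) :=
    funext fun s => dft_eq N k φ s
  constructor
  · intro t ht
    have hD : HasDerivWithinAt
        (fun s => ∑ j ∈ Finset.range N, ((φ (j : ℤ) s : ℝ) : ℂ) * eC N k (j : ℤ))
        (∑ j ∈ Finset.range N,
          ((((∑ j' ∈ Finset.range N, φ (j' : ℤ) t * φ ((N : ℤ) + (j : ℤ) - (j' : ℤ)) t)
            - epsZ ε (j : ℤ) : ℝ)) : ℂ) * eC N k (j : ℤ)) (Set.Icc (0:ℝ) T) t := by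
      apply HasDerivWithinAt.fun_sum
      intro j hj
      rw [Finset.mem_range] at hj
      have h := hderiv j hj t ht
      have hC := (Complex.ofRealCLM.hasFDerivAt.comp_hasDerivWithinAt t h).mul_const
        (eC N k (j : ℤ))
      simpa using hC
    have key : (∑ j ∈ Finset.range N,
          ((((∑ j' ∈ Finset.range N, φ (j' : ℤ) t * φ ((N : ℤ) + (j : ℤ) - (j' : ℤ)) t)
            - epsZ ε (j : ℤ) : ℝ)) : ℂ) * eC N k (j : ℤ))
        = (dft N φ k t) ^ 2 - (1 - eC N k 1) * (ε : ℂ) := by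
      have hsplit : ∀ j : ℕ,
          ((((∑ j' ∈ Finset.range N, φ (j' : ℤ) t * φ ((N : ℤ) + (j : ℤ) - (j' : ℤ)) t)
            - epsZ ε (j : ℤ) : ℝ)) : ℂ) * eC N k (j : ℤ)
          = (∑ j' ∈ Finset.range N,
              ((φ (j' : ℤ) t : ℝ) : ℂ) * ((φ ((N : ℤ) + (j : ℤ) - (j' : ℤ)) t : ℝ) : ℂ))
              * eC N k (j : ℤ)
            - ((epsZ ε (j : ℤ) : ℝ) : ℂ) * eC N k (j : ℤ) := by
        intro j
        push_cast
        ring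
      rw [Finset.sum_congr rfl fun j _ => hsplit j, Finset.sum_sub_distrib, eps_sum N k hN ε,
        dft_eq N k φ t]
      congr 1
      exact conv_sum N hN0 k (fun i => ((φ i t : ℝ) : ℂ))
        (fun q i => by beta_reduce; rw [per_all N hper q i])
    rw [hfun, eC_one_eq N k, ← key]
    exact hD
  · rw [dft_eq N k φ T, eC_one_eq N k]
    rw [← Finset.sum_subset (Finset.range_subset_range.mpr hN) (fun x hx hx2 => by
      rw [Finset.mem_range, not_lt] at hx2
      rw [Finset.mem_range] at hx
      rw [hiT x hx2 hx]
      norm_num)]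
    rw [Finset.sum_range_succ, Finset.sum_range_one]
    push_cast [h0T, h1T, eC_zero]
    ring
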